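/- Let R be a ring of characteristic p in which the Frobenius map is surjective (semiperfect), and let R♭ = lim_Φ R be its inverse perfection with J = ker(R♭ → R). If J is a finitely generated ideal of R♭, then the ideals Φ^n(J) and J^n are cofinal, so J is an ideal of definition and R♭ is an f-adic (topologically finitely generated adic) ring. -/

import Mathlib

/-- The ideal generated by the image of `J` under the `n`-th iterate of the
Frobenius `Φ : x ↦ x^p`, i.e. the ideal generated by `p^n`-th powers of elements of `J`. -/
def frobPowIdeal {R : Type*} [CommRing R] (p n : ℕ) (J : Ideal R) : Ideal R :=
  Ideal.span ((fun x => x ^ p ^ n) '' (J : Set R))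

/-- Let `R` be a semiperfect ring of characteristic `p` (Frobenius
surjective), `R♭ = lim_Φ R` its inverse perfection and `J = ker (R♭ → R)`.  If `J` is
finitely generated, then the ideals `Φ^n(J)` and `J^n` are cofinal, so `J` is an ideal
of definition and `R♭` is f-adic. -/
theorem stmt_0 (p : ℕ) [Fact p.Prime] (R : Type*) [CommRing R] [CharP R p]
    (hsurj : ∀ x : R, ∃ y : R, y ^ p = x)
    (J : Ideal (Perfection R p))
    (hJ : J = RingHom.ker (Perfection.coeff R p 0))
    (hfg : J.FG) :
    (∀ n : ℕ, ∃ m : ℕ, frobPowIdeal p m J ≤ J ^ n) ∧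
    (∀ n : ℕ, ∃ m : ℕ, J ^ m ≤ frobPowIdeal p n J) := by
  constructor
  · intro n
    refine ⟨n, ?_⟩
    rw [frobPowIdeal, Ideal.span_le]
    rintro _ ⟨x, hx, rfl⟩
    have h1 : n ≤ p ^ n := le_of_lt (Nat.lt_pow_self (n := n) (Fact.out : p.Prime).one_lt)
    exact Ideal.pow_le_pow_right h1 (Ideal.pow_mem_pow hx _)
  · intro n
    have hle : J ≤ (frobPowIdeal p n J).radical := by
      intro x hx
      exact ⟨p ^ n, Ideal.subset_span ⟨x, hx, rfl⟩⟩
    obtain ⟨m, hm⟩ := Ideal.exists_pow_le_of_le_radical_of_fg hle hfg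
    exact ⟨m, hm⟩
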